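/- arXiv:1410.5063 — 3 statements merged into one kernel-verified Lean document; each statement's English description precedes it below -/
import Mathlib

section
/- Let n ≥ 1, m ≥ 2, and let A₁, …, A_m be real symmetric n×n matrices. Then Σ_{α≠β} ‖A_αA_β − A_βA_α‖² + Σ_{α,β} (tr(A_αA_β))² ≤ (3/2)·(Σ_α ‖A_α‖²)², where the sums run over α, β ∈ {1, …, m} and ‖·‖ denotes the Frobenius norm. -/
open Finset Matrix

namespace LiLi

variable {n : ℕ}

/-- entrywise inner product -/
def ip (X Y : Matrix (Fin n) (Fin n) ℝ) : ℝ := ∑ i, ∑ j, X i j * Y i j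

def nsq (X : Matrix (Fin n) (Fin n) ℝ) : ℝ := ip X X

lemma nsq_eq_sum_sq (X : Matrix (Fin n) (Fin n) ℝ) : nsq X = ∑ i, ∑ j, (X i j)^2 := by
  simp [nsq, ip, pow_two]

lemma nsq_nonneg (X : Matrix (Fin n) (Fin n) ℝ) : 0 ≤ nsq X := by
  rw [nsq_eq_sum_sq]
  exact Finset.sum_nonneg fun i _ => Finset.sum_nonneg fun j _ => sq_nonneg _

lemma ip_comm (X Y : Matrix (Fin n) (Fin n) ℝ) : ip X Y = ip Y X := by
  simp [ip, mul_comm]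

lemma ip_eq_trace (X Y : Matrix (Fin n) (Fin n) ℝ) : ip X Y = Matrix.trace (Xᵀ * Y) := by
  simp [ip, Matrix.trace, Matrix.diag, Matrix.mul_apply, Matrix.transpose_apply]
  rw [Finset.sum_comm]

lemma nsq_zero : nsq (0 : Matrix (Fin n) (Fin n) ℝ) = 0 := by simp [nsq, ip]

/-- real spectral theorem, convenient form -/
lemma real_spectral {k : ℕ} (A : Matrix (Fin k) (Fin k) ℝ) (hA : A.IsSymm) :
    ∃ (U : Matrix (Fin k) (Fin k) ℝ) (lam : Fin k → ℝ),
      Uᵀ * U = 1 ∧ U * Uᵀ = 1 ∧ Uᵀ * A * U = Matrix.diagonal lam := by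
  have hH : A.IsHermitian := by
    rw [Matrix.IsHermitian, Matrix.conjTranspose_eq_transpose_of_trivial]; exact hA.eq
  refine ⟨(Matrix.IsHermitian.eigenvectorUnitary hH : Matrix (Fin k) (Fin k) ℝ),
    hH.eigenvalues, ?_, ?_, ?_⟩
  · have h := Matrix.mem_unitaryGroup_iff'.mp (Matrix.IsHermitian.eigenvectorUnitary hH).2
    rwa [Matrix.star_eq_conjTranspose, Matrix.conjTranspose_eq_transpose_of_trivial] at h
  · have h := Matrix.mem_unitaryGroup_iff.mp (Matrix.IsHermitian.eigenvectorUnitary hH).2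
    rwa [Matrix.star_eq_conjTranspose, Matrix.conjTranspose_eq_transpose_of_trivial] at h
  · have h := hH.conjStarAlgAut_star_eigenvectorUnitary
    rw [Unitary.conjStarAlgAut_star_apply] at h
    rw [Matrix.star_eq_conjTranspose, Matrix.conjTranspose_eq_transpose_of_trivial] at h
    rw [h, RCLike.ofReal_real_eq_id]
    rfl

/-- conjugation invariance of ip -/
lemma ip_conj {U Y Z : Matrix (Fin n) (Fin n) ℝ} (hU1 : Uᵀ * U = 1) (hU2 : U * Uᵀ = 1) :
    ip (Uᵀ * Y * U) (Uᵀ * Z * U) = ip Y Z := by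
  have key : ∀ X : Matrix (Fin n) (Fin n) ℝ, U * (Uᵀ * X) = X := fun X => by
    rw [← Matrix.mul_assoc, hU2, Matrix.one_mul]
  rw [ip_eq_trace, ip_eq_trace]
  have h1 : (Uᵀ * Y * U)ᵀ = Uᵀ * Yᵀ * U := by
    simp [Matrix.transpose_mul, Matrix.mul_assoc]
  rw [h1]
  have h2 : Uᵀ * Yᵀ * U * (Uᵀ * Z * U) = Uᵀ * (Yᵀ * Z) * U := by
    simp only [Matrix.mul_assoc, key]
  rw [h2, Matrix.trace_mul_cycle]
  rw [← Matrix.mul_assoc, hU2, Matrix.one_mul]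




/-- indicator vector of an ordered pair -/
def dv (p : Fin n × Fin n) (i : Fin n) : ℝ :=
  (if p.1 = i then 1 else 0) - (if p.2 = i then 1 else 0)

lemma indsum (a b : Fin n) :
    ∑ i, (if a = i then (1:ℝ) else 0) * (if b = i then 1 else 0)
      = if a = b then 1 else 0 := by
  by_cases h : a = b
  · subst h
    simp
  · rw [Finset.sum_eq_zero]
    · simp [h]
    · intro i _
      by_cases h1 : a = i
      · by_cases h2 : b = i
        · exact absurd (h1.trans h2.symm) h
        · simp [h2]
      · simp [h1]

lemma gram_calc (p q : Fin n × Fin n) :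
    ∑ i, dv p i * dv q i
      = ((if p.1 = q.1 then (1:ℝ) else 0) - (if p.1 = q.2 then 1 else 0))
        - ((if p.2 = q.1 then (1:ℝ) else 0) - (if p.2 = q.2 then 1 else 0)) := by
  have expand : ∀ i, dv p i * dv q i
      = ((if p.1 = i then (1:ℝ) else 0) * (if q.1 = i then 1 else 0)
          - (if p.1 = i then (1:ℝ) else 0) * (if q.2 = i then 1 else 0))
        - ((if p.2 = i then (1:ℝ) else 0) * (if q.1 = i then 1 else 0)
          - (if p.2 = i then (1:ℝ) else 0) * (if q.2 = i then 1 else 0)) := by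
    intro i; simp only [dv]; ring
  simp only [expand, Finset.sum_sub_distrib, indsum]

def rho (p q : Fin n × Fin n) : ℝ :=
  1 + (if q = p then 1 else 0) + (if q = (p.2, p.1) then 1 else 0)

lemma rho_symm (p q : Fin n × Fin n) : rho p q = rho q p := by
  simp only [rho, Prod.ext_iff]
  have h1 : (q.1 = p.1 ∧ q.2 = p.2) ↔ (p.1 = q.1 ∧ p.2 = q.2) := by
    constructor <;> (rintro ⟨a, b⟩; exact ⟨a.symm, b.symm⟩)
  have h2 : (q.1 = p.2 ∧ q.2 = p.1) ↔ (p.1 = q.2 ∧ p.2 = q.1) := by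
    constructor <;> (rintro ⟨a, b⟩; exact ⟨b.symm, a.symm⟩)
  rw [if_congr h1 rfl rfl, if_congr h2 rfl rfl]

lemma gram_bound (p q : Fin n × Fin n) (hp : p.1 ≠ p.2) (hq : q.1 ≠ q.2) :
    |∑ i, dv p i * dv q i| ≤ rho p q := by
  rw [gram_calc, rho]
  by_cases h11 : p.1 = q.1 <;> by_cases h12 : p.1 = q.2 <;>
    by_cases h21 : p.2 = q.1 <;> by_cases h22 : p.2 = q.2 <;>
      simp_all [Prod.ext_iff, abs_le] <;>
    first
      | (constructor <;> (try split_ifs) <;> norm_num)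
      | ((try split_ifs) <;> norm_num)

lemma row_bound (E : Finset (Fin n × Fin n)) (p : Fin n × Fin n) :
    ∑ q ∈ E, rho p q ≤ (E.card : ℝ) + 2 := by
  simp only [rho, Finset.sum_add_distrib, Finset.sum_const, nsmul_eq_mul, mul_one]
  have h1 : (∑ q ∈ E, if q = p then (1:ℝ) else 0) ≤ 1 := by
    rw [Finset.sum_ite_eq' E p (fun _ => (1:ℝ))]
    split <;> norm_num
  have h2 : (∑ q ∈ E, if q = (p.2, p.1) then (1:ℝ) else 0) ≤ 1 := by
    rw [Finset.sum_ite_eq' E (p.2, p.1) (fun _ => (1:ℝ))]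
    split <;> norm_num
  linarith

lemma sumg (lam : Fin n → ℝ) (E : Finset (Fin n × Fin n)) (hE : ∀ p ∈ E, p.1 ≠ p.2) :
    ∑ p ∈ E, (lam p.1 - lam p.2)^2 ≤ ((E.card : ℝ) + 2) * ∑ i, (lam i)^2 := by
  set c : (Fin n × Fin n) → ℝ := fun p => lam p.1 - lam p.2 with hc
  set S : ℝ := ∑ p ∈ E, (c p)^2 with hS
  set y : Fin n → ℝ := fun i => ∑ p ∈ E, c p * dv p i with hy
  set NN : ℝ := ∑ i, (lam i)^2 with hNN
  have hSnonneg : 0 ≤ S := Finset.sum_nonneg fun p _ => sq_nonneg _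
  have hNNnonneg : 0 ≤ NN := Finset.sum_nonneg fun i _ => sq_nonneg _
  have hcard : (0:ℝ) ≤ (E.card : ℝ) + 2 := by positivity
  -- h1 : ∑ i, y i * lam i = S
  have dlam : ∀ p : Fin n × Fin n, ∑ i, dv p i * lam i = lam p.1 - lam p.2 := by
    intro p
    simp only [dv, sub_mul, ite_mul, one_mul, zero_mul, Finset.sum_sub_distrib,
      Finset.sum_ite_eq, Finset.mem_univ, if_true]
  have h1 : ∑ i, y i * lam i = S := by
    simp only [hy, Finset.sum_mul]
    rw [Finset.sum_comm]
    refine Finset.sum_congr rfl fun p _ => ?_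
    have : ∑ i, c p * dv p i * lam i = c p * ∑ i, dv p i * lam i := by
      rw [Finset.mul_sum]
      exact Finset.sum_congr rfl fun i _ => by ring
    rw [this, dlam p]
    simp only [hc]
    ring
  -- h3 : ∑ i, y i ^ 2 ≤ (card + 2) * S
  have h3 : ∑ i, (y i)^2 ≤ ((E.card : ℝ) + 2) * S := by
    have expand : ∑ i, (y i)^2 = ∑ p ∈ E, ∑ q ∈ E, (c p * c q) * ∑ i, dv p i * dv q i := by
      have e1 : ∀ i, (y i)^2 = ∑ p ∈ E, ∑ q ∈ E, (c p * c q) * (dv p i * dv q i) := by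
        intro i
        rw [pow_two, hy]
        rw [Finset.sum_mul_sum]
        exact Finset.sum_congr rfl fun p _ => Finset.sum_congr rfl fun q _ => by ring
      simp only [e1]
      rw [Finset.sum_comm]
      refine Finset.sum_congr rfl fun p _ => ?_
      rw [Finset.sum_comm]
      exact Finset.sum_congr rfl fun q _ => by rw [Finset.mul_sum]
    rw [expand]
    have step1 : ∑ p ∈ E, ∑ q ∈ E, (c p * c q) * ∑ i, dv p i * dv q i
        ≤ ∑ p ∈ E, ∑ q ∈ E, ((c p)^2 + (c q)^2) / 2 * rho p q := by
      refine Finset.sum_le_sum fun p hp => Finset.sum_le_sum fun q hq => ?_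
      have hg := gram_bound p q (hE p hp) (hE q hq)
      have habs : (c p * c q) * ∑ i, dv p i * dv q i
          ≤ |c p * c q| * |∑ i, dv p i * dv q i| := by
        calc (c p * c q) * ∑ i, dv p i * dv q i ≤ |(c p * c q) * ∑ i, dv p i * dv q i| :=
              le_abs_self _
        _ = |c p * c q| * |∑ i, dv p i * dv q i| := abs_mul _ _
      have hrho_nonneg : (0:ℝ) ≤ rho p q := by
        simp only [rho]; split <;> split <;> norm_num
      have h2 : |c p * c q| * |∑ i, dv p i * dv q i| ≤ |c p * c q| * rho p q :=
        mul_le_mul_of_nonneg_left hg (abs_nonneg _)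
      have h4' : |c p| * |c q| ≤ (|c p|^2 + |c q|^2) / 2 := by
        nlinarith [sq_nonneg (|c p| - |c q|)]
      have h4 : |c p * c q| ≤ ((c p)^2 + (c q)^2) / 2 := by
        rw [abs_mul]
        calc |c p| * |c q| ≤ (|c p|^2 + |c q|^2) / 2 := h4'
        _ = ((c p)^2 + (c q)^2) / 2 := by rw [sq_abs, sq_abs]
      calc (c p * c q) * ∑ i, dv p i * dv q i ≤ |c p * c q| * rho p q := le_trans habs h2
      _ ≤ ((c p)^2 + (c q)^2) / 2 * rho p q := mul_le_mul_of_nonneg_right h4 hrho_nonneg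
    have step2 : ∑ p ∈ E, ∑ q ∈ E, ((c p)^2 + (c q)^2) / 2 * rho p q
        = ∑ p ∈ E, (c p)^2 * ∑ q ∈ E, rho p q := by
      have split : ∀ p q : Fin n × Fin n, ((c p)^2 + (c q)^2) / 2 * rho p q
          = (c p)^2 * rho p q / 2 + (c q)^2 * rho p q / 2 := by intro p q; ring
      simp only [split, Finset.sum_add_distrib]
      have swap2 : ∑ p ∈ E, ∑ q ∈ E, (c q)^2 * rho p q / 2
          = ∑ p ∈ E, ∑ q ∈ E, (c p)^2 * rho p q / 2 := by
        rw [Finset.sum_comm]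
        refine Finset.sum_congr rfl fun p _ => Finset.sum_congr rfl fun q _ => ?_
        rw [rho_symm]
      rw [swap2]
      rw [← Finset.sum_add_distrib]
      refine Finset.sum_congr rfl fun p _ => ?_
      rw [← Finset.sum_add_distrib, Finset.mul_sum]
      exact Finset.sum_congr rfl fun q _ => by ring
    have step3 : ∑ p ∈ E, (c p)^2 * ∑ q ∈ E, rho p q ≤ ∑ p ∈ E, (c p)^2 * ((E.card : ℝ) + 2) := by
      refine Finset.sum_le_sum fun p _ => mul_le_mul_of_nonneg_left (row_bound E p) (sq_nonneg _)
    calc ∑ p ∈ E, ∑ q ∈ E, (c p * c q) * ∑ i, dv p i * dv q i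
        ≤ ∑ p ∈ E, (c p)^2 * ∑ q ∈ E, rho p q := by rw [← step2]; exact step1
    _ ≤ ∑ p ∈ E, (c p)^2 * ((E.card : ℝ) + 2) := step3
    _ = ((E.card : ℝ) + 2) * S := by
      rw [hS, Finset.mul_sum]
      exact Finset.sum_congr rfl fun p _ => by ring
  -- CS
  have h2 : (∑ i, y i * lam i)^2 ≤ (∑ i, (y i)^2) * NN :=
    Finset.sum_mul_sq_le_sq_mul_sq Finset.univ y lam
  rw [h1] at h2
  -- conclude S ≤ (card+2) * NN
  rcases eq_or_lt_of_le hSnonneg with hS0 | hSpos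
  · rw [← hS0]
    positivity
  · have key : S * S ≤ (((E.card : ℝ) + 2) * NN) * S := by
      calc S * S = S^2 := by ring
      _ ≤ (∑ i, (y i)^2) * NN := h2
      _ ≤ (((E.card : ℝ) + 2) * S) * NN := mul_le_mul_of_nonneg_right h3 hNNnonneg
      _ = (((E.card : ℝ) + 2) * NN) * S := by ring
    exact le_of_mul_le_mul_right key hSpos


lemma exs (lam : Fin n → ℝ) :
    ∑ p : Fin n × Fin n, max ((lam p.1 - lam p.2)^2 - ∑ i, (lam i)^2) 0
      ≤ 2 * ∑ i, (lam i)^2 := by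
  set NN : ℝ := ∑ i, (lam i)^2 with hNN
  have hNNnonneg : 0 ≤ NN := Finset.sum_nonneg fun i _ => sq_nonneg _
  set E : Finset (Fin n × Fin n) :=
    Finset.univ.filter (fun p => NN < (lam p.1 - lam p.2)^2) with hEdef
  have hE : ∀ p ∈ E, p.1 ≠ p.2 := by
    intro p hp hpe
    have h := (Finset.mem_filter.mp hp).2
    rw [hpe] at h
    simp at h
    linarith
  have hsplit : ∑ p : Fin n × Fin n, max ((lam p.1 - lam p.2)^2 - NN) 0
      = ∑ p ∈ E, ((lam p.1 - lam p.2)^2 - NN) := by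
    rw [← Finset.sum_filter_add_sum_filter_not Finset.univ
      (fun p : Fin n × Fin n => NN < (lam p.1 - lam p.2)^2)]
    have hz : ∑ p ∈ Finset.univ.filter
        (fun p : Fin n × Fin n => ¬ NN < (lam p.1 - lam p.2)^2),
        max ((lam p.1 - lam p.2)^2 - NN) 0 = 0 := by
      refine Finset.sum_eq_zero fun p hp => ?_
      have h := (Finset.mem_filter.mp hp).2
      push_neg at h
      exact max_eq_right (by linarith)
    rw [hz, add_zero]
    refine Finset.sum_congr rfl fun p hp => ?_
    have h := (Finset.mem_filter.mp hp).2
    exact max_eq_left (by linarith)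
  rw [hsplit, Finset.sum_sub_distrib, Finset.sum_const, nsmul_eq_mul]
  have := sumg lam E hE
  linarith


lemma bessel {κ ι : Type*} [Fintype κ] [Fintype ι] (v : ι → κ → ℝ) (y : κ → ℝ) (M : ℝ)
    (hM0 : 0 ≤ M)
    (horth : ∀ t s, t ≠ s → ∑ k, v t k * v s k = 0)
    (hM : ∀ t, ∑ k, v t k * v t k ≤ M) :
    ∑ t, (∑ k, v t k * y k)^2 ≤ M * ∑ k, y k * y k := by
  classical
  set c : ι → ℝ := fun t => ∑ k, v t k * y k with hc
  set S : ℝ := ∑ t, (c t)^2 with hS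
  set Y : ℝ := ∑ k, y k * y k with hY
  have hYnonneg : 0 ≤ Y := Finset.sum_nonneg fun k _ => mul_self_nonneg _
  rcases eq_or_lt_of_le hM0 with hMz | hMpos
  · -- M = 0 : each v t is zero
    have hvz : ∀ t k, v t k = 0 := by
      intro t k
      have h1 : ∑ k, v t k * v t k ≤ 0 := by rw [hMz]; exact hM t
      have h2 : ∀ k' ∈ Finset.univ, 0 ≤ v t k' * v t k' := fun k' _ => mul_self_nonneg _
      have hsum0 : ∑ k, v t k * v t k = 0 := le_antisymm h1 (Finset.sum_nonneg h2)
      have h3 := (Finset.sum_eq_zero_iff_of_nonneg h2).mp hsum0 k (Finset.mem_univ k)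
      exact mul_self_eq_zero.mp h3
    have hSz : S = 0 := by
      rw [hS]
      refine Finset.sum_eq_zero fun t _ => ?_
      have hct : c t = 0 := by
        rw [hc]
        exact Finset.sum_eq_zero fun k _ => by rw [hvz t k, zero_mul]
      rw [hct]; ring
    rw [← hMz]
    simpa [hSz] using le_refl (0:ℝ)
  · -- M > 0
    have hpt : (0:ℝ) ≤ ∑ k, (M * y k - ∑ t, c t * v t k)^2 :=
      Finset.sum_nonneg fun k _ => sq_nonneg _
    have hexp : ∑ k, (M * y k - ∑ t, c t * v t k)^2
        = M^2 * Y - 2*M*S + ∑ t, (c t)^2 * (∑ k, v t k * v t k) := by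
      have e1 : ∀ k, (M * y k - ∑ t, c t * v t k)^2
          = M^2 * (y k * y k) - 2*M*(y k * ∑ t, c t * v t k)
            + (∑ t, c t * v t k) * (∑ s, c s * v s k) := by
        intro k; ring
      simp only [e1]
      rw [Finset.sum_add_distrib, Finset.sum_sub_distrib, ← Finset.mul_sum, ← hY,
        ← Finset.mul_sum]
      have e2 : ∑ k, y k * ∑ t, c t * v t k = S := by
        have e2a : ∀ k, y k * ∑ t, c t * v t k = ∑ t, c t * (v t k * y k) := by
          intro k; rw [Finset.mul_sum]; exact Finset.sum_congr rfl fun t _ => by ring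
        simp only [e2a]
        rw [Finset.sum_comm, hS]
        refine Finset.sum_congr rfl fun t _ => ?_
        rw [← Finset.mul_sum]
        simp only [hc]
        ring
      rw [e2]
      congr 1
      -- cross term
      have e3 : ∀ k, (∑ t, c t * v t k) * (∑ s, c s * v s k)
          = ∑ t, ∑ s, (c t * c s) * (v t k * v s k) := by
        intro k
        rw [Finset.sum_mul_sum]
        exact Finset.sum_congr rfl fun t _ => Finset.sum_congr rfl fun s _ => by ring
      simp only [e3]
      rw [Finset.sum_comm]
      refine Finset.sum_congr rfl fun t _ => ?_
      rw [Finset.sum_comm]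
      have e4 : ∀ s, ∑ k, (c t * c s) * (v t k * v s k)
          = (c t * c s) * ∑ k, v t k * v s k := by
        intro s
        exact (Finset.mul_sum _ _ _).symm
      simp only [e4]
      have e5 : ∑ s, (c t * c s) * ∑ k, v t k * v s k
          = (c t * c t) * ∑ k, v t k * v t k := by
        apply Finset.sum_eq_single_of_mem t (Finset.mem_univ t)
        intro s _ hst
        rw [horth t s (Ne.symm hst)]
        exact mul_zero _
      rw [e5]
      ring
    rw [hexp] at hpt
    have hcross : ∑ t, (c t)^2 * (∑ k, v t k * v t k) ≤ M * S := by
      rw [hS, Finset.mul_sum]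
      refine Finset.sum_le_sum fun t _ => ?_
      calc (c t)^2 * (∑ k, v t k * v t k) ≤ (c t)^2 * M :=
            mul_le_mul_of_nonneg_left (hM t) (sq_nonneg _)
      _ = M * (c t)^2 := by ring
    have key : M * S ≤ M * (M * Y) := by nlinarith
    have hfin := (mul_le_mul_iff_right₀ hMpos).mp key
    calc S ≤ M * Y := hfin
    _ = M * ∑ k, y k * y k := by rw [hY]


lemma indsum2 {κ : Type*} [Fintype κ] [DecidableEq κ] (a b : κ) :
    ∑ k, (if k = a then (1:ℝ) else 0) * (if k = b then 1 else 0) = if a = b then 1 else 0 := by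
  by_cases h : a = b
  · subst h
    simp [Finset.sum_ite_eq']
  · rw [Finset.sum_eq_zero]
    · simp [h]
    · intro k _
      by_cases h1 : k = a
      · by_cases h2 : k = b
        · exact absurd (h1.symm.trans h2) h
        · simp [h2]
      · simp [h1]

lemma comm_diag_entry (lam : Fin n → ℝ) (X : Matrix (Fin n) (Fin n) ℝ) :
    nsq (Matrix.diagonal lam * X - X * Matrix.diagonal lam)
      = ∑ i, ∑ j, (lam i - lam j)^2 * (X i j)^2 := by
  rw [nsq_eq_sum_sq]
  refine Finset.sum_congr rfl fun i _ => Finset.sum_congr rfl fun j _ => ?_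
  have h : (Matrix.diagonal lam * X - X * Matrix.diagonal lam) i j
      = (lam i - lam j) * X i j := by
    simp [Matrix.sub_apply, Matrix.diagonal_mul, Matrix.mul_diagonal]
    ring
  rw [h]
  ring

lemma diag_core {ι : Type*} [Fintype ι] (lam : Fin n → ℝ) (X : ι → Matrix (Fin n) (Fin n) ℝ)
    (hsym : ∀ t, (X t).IsSymm) (horth : ∀ t s, t ≠ s → ip (X t) (X s) = 0)
    (M : ℝ) (hM0 : 0 ≤ M) (hM : ∀ t, nsq (X t) ≤ M) :
    ∑ t, nsq (Matrix.diagonal lam * X t - X t * Matrix.diagonal lam)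
      ≤ (∑ i, (lam i)^2) * ((∑ t, nsq (X t)) + M) := by
  classical
  set NN : ℝ := ∑ i, (lam i)^2 with hNN
  have hNNnonneg : 0 ≤ NN := Finset.sum_nonneg fun i _ => sq_nonneg _
  set sm : Fin n → Fin n → ℝ := fun i j => ∑ t, (X t i j)^2 with hsm
  have hsm_nonneg : ∀ i j, 0 ≤ sm i j := fun i j => Finset.sum_nonneg fun t _ => sq_nonneg _
  -- step 1 : LHS = ∑ i j, g * sm
  have step1 : ∑ t, nsq (Matrix.diagonal lam * X t - X t * Matrix.diagonal lam)
      = ∑ i, ∑ j, (lam i - lam j)^2 * sm i j := by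
    simp only [comm_diag_entry]
    rw [Finset.sum_comm]
    refine Finset.sum_congr rfl fun i _ => ?_
    rw [Finset.sum_comm]
    refine Finset.sum_congr rfl fun j _ => ?_
    rw [hsm, Finset.mul_sum]
  -- step 2 : Bessel bound
  have sBessel : ∀ i j : Fin n, i ≠ j → sm i j ≤ M / 2 := by
    intro i j hij
    have hb := bessel (κ := Fin n × Fin n) (ι := ι)
      (fun t k => X t k.1 k.2)
      (fun k => (if k = (i,j) then 1 else 0) + (if k = (j,i) then 1 else 0)) M hM0
      (fun t s hts => by
        have : ∑ k : Fin n × Fin n, X t k.1 k.2 * X s k.1 k.2 = ip (X t) (X s) := by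
          rw [ip, Fintype.sum_prod_type]
        rw [this]
        exact horth t s hts)
      (fun t => by
        have : ∑ k : Fin n × Fin n, X t k.1 k.2 * X t k.1 k.2 = nsq (X t) := by
          rw [nsq, ip, Fintype.sum_prod_type]
        rw [this]
        exact hM t)
    have hswap : ((i,j) : Fin n × Fin n) ≠ (j,i) := by
      simp [Prod.ext_iff]
      intro h; exact absurd h hij
    -- compute the two sums in hb
    have hvy : ∀ t, ∑ k : Fin n × Fin n,
        X t k.1 k.2 * ((if k = (i,j) then (1:ℝ) else 0) + (if k = (j,i) then 1 else 0))
          = 2 * X t i j := by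
      intro t
      have e : ∀ k : Fin n × Fin n, X t k.1 k.2 * ((if k = (i,j) then (1:ℝ) else 0)
            + (if k = (j,i) then 1 else 0))
          = (if k = (i,j) then X t k.1 k.2 else 0) + (if k = (j,i) then X t k.1 k.2 else 0) := by
        intro k
        by_cases h1 : k = (i,j)
        · by_cases h2 : k = (j,i)
          · exact absurd (h1.symm.trans h2) hswap
          · simp [h1, h2, hij, Ne.symm hij]
        · by_cases h2 : k = (j,i) <;> simp [h1, h2, hij, Ne.symm hij]
      simp only [e]
      rw [Finset.sum_add_distrib, Finset.sum_ite_eq' Finset.univ ((i,j) : Fin n × Fin n),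
        Finset.sum_ite_eq' Finset.univ ((j,i) : Fin n × Fin n)]
      simp [(hsym t).apply i j]
      ring
    have hyy : ∑ k : Fin n × Fin n,
        ((if k = (i,j) then (1:ℝ) else 0) + (if k = (j,i) then 1 else 0))
          * ((if k = (i,j) then (1:ℝ) else 0) + (if k = (j,i) then 1 else 0)) = 2 := by
      have e : ∀ k : Fin n × Fin n,
          ((if k = (i,j) then (1:ℝ) else 0) + (if k = (j,i) then 1 else 0))
            * ((if k = (i,j) then (1:ℝ) else 0) + (if k = (j,i) then 1 else 0))
          = (if k = (i,j) then (1:ℝ) else 0) * (if k = (i,j) then (1:ℝ) else 0)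
            + (if k = (j,i) then (1:ℝ) else 0) * (if k = (j,i) then (1:ℝ) else 0)
            + 2 * ((if k = (i,j) then (1:ℝ) else 0) * (if k = (j,i) then (1:ℝ) else 0)) := by
        intro k; ring
      simp only [e]
      rw [Finset.sum_add_distrib, Finset.sum_add_distrib, indsum2, indsum2, ← Finset.mul_sum,
        indsum2]
      simp [hswap]
      norm_num
    rw [hyy] at hb
    simp only [hvy] at hb
    have hb2 : ∑ t, (2 * X t i j)^2 = 4 * sm i j := by
      rw [hsm, Finset.mul_sum]
      exact Finset.sum_congr rfl fun t _ => by ring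
    rw [hb2] at hb
    linarith
  -- step 3 : total mass
  have step3 : ∑ i, ∑ j, sm i j = ∑ t, nsq (X t) := by
    simp only [nsq_eq_sum_sq, hsm]
    calc ∑ i, ∑ j, ∑ t, (X t i j)^2 = ∑ i, ∑ t, ∑ j, (X t i j)^2 :=
          Finset.sum_congr rfl fun i _ => Finset.sum_comm
    _ = ∑ t, ∑ i, ∑ j, (X t i j)^2 := Finset.sum_comm
  set V : ℝ := ∑ t, nsq (X t) with hV
  -- step 4 : assemble
  set phi : Fin n → Fin n → ℝ := fun i j => max ((lam i - lam j)^2 - NN) 0 with hphi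
  have hphi_nonneg : ∀ i j, 0 ≤ phi i j := fun i j => le_max_right _ _
  have hpt : ∀ i j, (lam i - lam j)^2 * sm i j ≤ NN * sm i j + phi i j * (M/2) := by
    intro i j
    have hg : (lam i - lam j)^2 ≤ NN + phi i j := by
      have := le_max_left ((lam i - lam j)^2 - NN) 0
      linarith
    have h1 : (lam i - lam j)^2 * sm i j ≤ (NN + phi i j) * sm i j :=
      mul_le_mul_of_nonneg_right hg (hsm_nonneg i j)
    have h2 : phi i j * sm i j ≤ phi i j * (M/2) := by
      by_cases hij : i = j
      · subst hij
        have hzz : phi i i = 0 := by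
          have hz : (lam i - lam i)^2 - NN ≤ 0 := by nlinarith [hNNnonneg]
          simp only [hphi]
          exact max_eq_right hz
        rw [hzz]
        simp
      · exact mul_le_mul_of_nonneg_left (sBessel i j hij) (hphi_nonneg i j)
    nlinarith [h1, h2]
  have hphisum : ∑ i, ∑ j, phi i j ≤ 2 * NN := by
    have h := exs lam
    have e : ∑ i, ∑ j, phi i j = ∑ p : Fin n × Fin n, phi p.1 p.2 := by
      rw [Fintype.sum_prod_type]
    rw [e]
    simp only [hphi]
    rw [hNN]
    exact h
  calc ∑ t, nsq (Matrix.diagonal lam * X t - X t * Matrix.diagonal lam)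
      = ∑ i, ∑ j, (lam i - lam j)^2 * sm i j := step1
  _ ≤ ∑ i, ∑ j, (NN * sm i j + phi i j * (M/2)) :=
      Finset.sum_le_sum fun i _ => Finset.sum_le_sum fun j _ => hpt i j
  _ = NN * V + (∑ i, ∑ j, phi i j) * (M/2) := by
      simp only [Finset.sum_add_distrib]
      congr 1
      · rw [← step3, Finset.mul_sum]
        exact Finset.sum_congr rfl fun i _ => by rw [Finset.mul_sum]
      · rw [Finset.sum_mul]
        exact Finset.sum_congr rfl fun i _ => by rw [Finset.sum_mul]
  _ ≤ NN * V + (2 * NN) * (M/2) := by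
      have : (∑ i, ∑ j, phi i j) * (M/2) ≤ (2 * NN) * (M/2) :=
        mul_le_mul_of_nonneg_right hphisum (by linarith)
      linarith
  _ = NN * (V + M) := by ring


lemma nsq_diagonal (lam : Fin n → ℝ) : nsq (Matrix.diagonal lam) = ∑ i, (lam i)^2 := by
  rw [nsq_eq_sum_sq]
  refine Finset.sum_congr rfl fun i _ => ?_
  rw [Finset.sum_eq_single i]
  · simp
  · intro j _ hji
    rw [Matrix.diagonal_apply_ne lam (Ne.symm hji)]
    norm_num
  · intro h
    exact absurd (Finset.mem_univ i) h

lemma core {ι : Type*} [Fintype ι] (A : Matrix (Fin n) (Fin n) ℝ) (hA : A.IsSymm)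
    (B : ι → Matrix (Fin n) (Fin n) ℝ) (hBsym : ∀ t, (B t).IsSymm)
    (hBorth : ∀ t s, t ≠ s → ip (B t) (B s) = 0)
    (M : ℝ) (hM0 : 0 ≤ M) (hM : ∀ t, nsq (B t) ≤ M) :
    ∑ t, nsq (A * B t - B t * A) ≤ nsq A * ((∑ t, nsq (B t)) + M) := by
  obtain ⟨U, lam, hU1, hU2, hdiag⟩ := real_spectral A hA
  have cancel1 : ∀ Z : Matrix (Fin n) (Fin n) ℝ, U * (Uᵀ * Z) = Z := fun Z => by
    rw [← Matrix.mul_assoc, hU2, Matrix.one_mul]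
  have cancel2 : ∀ Z : Matrix (Fin n) (Fin n) ℝ, Uᵀ * (U * Z) = Z := fun Z => by
    rw [← Matrix.mul_assoc, hU1, Matrix.one_mul]
  set X : ι → Matrix (Fin n) (Fin n) ℝ := fun t => Uᵀ * B t * U with hX
  have hAeq : A = U * Matrix.diagonal lam * Uᵀ := by
    calc A = (U * Uᵀ) * A * (U * Uᵀ) := by rw [hU2, Matrix.one_mul, Matrix.mul_one]
    _ = U * (Uᵀ * A * U) * Uᵀ := by simp only [Matrix.mul_assoc]
    _ = U * Matrix.diagonal lam * Uᵀ := by rw [hdiag]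
  have hipX : ∀ t s, ip (X t) (X s) = ip (B t) (B s) := fun t s => ip_conj hU1 hU2
  have hnsqX : ∀ t, nsq (X t) = nsq (B t) := fun t => ip_conj hU1 hU2
  have hconj_nsq : ∀ Z : Matrix (Fin n) (Fin n) ℝ, nsq (U * Z * Uᵀ) = nsq Z := by
    intro Z
    have h := ip_conj (U := Uᵀ) (Y := Z) (Z := Z)
      (by rw [Matrix.transpose_transpose]; exact hU2)
      (by rw [Matrix.transpose_transpose]; exact hU1)
    rw [Matrix.transpose_transpose] at h
    exact h
  have hcomm : ∀ t, A * B t - B t * A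
      = U * ((Matrix.diagonal lam) * X t - X t * (Matrix.diagonal lam)) * Uᵀ := by
    intro t
    rw [hAeq]
    simp only [hX, Matrix.mul_sub, Matrix.sub_mul, Matrix.mul_assoc, hU2, Matrix.mul_one,
      cancel1, cancel2]
  have hsymX : ∀ t, (X t).IsSymm := by
    intro t
    rw [Matrix.IsSymm, hX]
    simp only [Matrix.transpose_mul, Matrix.transpose_transpose, (hBsym t).eq]
    rw [Matrix.mul_assoc]
  have horthX : ∀ t s, t ≠ s → ip (X t) (X s) = 0 := fun t s hts =>
    (hipX t s).trans (hBorth t s hts)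
  have hMX : ∀ t, nsq (X t) ≤ M := fun t => (hnsqX t) ▸ hM t
  have hmain := diag_core lam X hsymX horthX M hM0 hMX
  have hL : ∑ t, nsq (A * B t - B t * A)
      = ∑ t, nsq (Matrix.diagonal lam * X t - X t * Matrix.diagonal lam) := by
    refine Finset.sum_congr rfl fun t _ => ?_
    rw [hcomm t, hconj_nsq]
  have hnsqA : nsq A = ∑ i, (lam i)^2 := by
    have h1 : nsq (Uᵀ * A * U) = nsq A := ip_conj hU1 hU2
    rw [← h1, hdiag, nsq_diagonal]
  have hsums : ∑ t, nsq (X t) = ∑ t, nsq (B t) :=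
    Finset.sum_congr rfl fun t _ => hnsqX t
  rw [hL, hnsqA]
  rw [← hsums]
  exact hmain


lemma orth_case {m : ℕ} (hm : 2 ≤ m) (A : Fin m → Matrix (Fin n) (Fin n) ℝ)
    (hsym : ∀ α, (A α).IsSymm) (horth : ∀ α β, α ≠ β → ip (A α) (A β) = 0) :
    (∑ α, ∑ β ∈ Finset.univ.erase α, nsq (A α * A β - A β * A α)) + ∑ α, (nsq (A α))^2
      ≤ (3/2) * (∑ α, nsq (A α))^2 := by
  classical
  haveI : Nontrivial (Fin m) :=
    ⟨⟨⟨0, by omega⟩, ⟨1, by omega⟩, by simp [Fin.ext_iff]⟩⟩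
  set Nf : Fin m → ℝ := fun α => nsq (A α) with hNf
  have hNf0 : ∀ α, 0 ≤ Nf α := fun α => nsq_nonneg _
  set T : ℝ := ∑ α, Nf α with hT
  obtain ⟨α₀, hα₀mem, hα₀max⟩ :=
    Finset.exists_max_image Finset.univ Nf ⟨Classical.arbitrary (Fin m), Finset.mem_univ _⟩
  obtain ⟨γ, hγ⟩ := exists_ne α₀
  obtain ⟨β₀, hβ₀mem, hβ₀max⟩ :=
    Finset.exists_max_image (Finset.univ.erase α₀) Nf
      ⟨γ, Finset.mem_erase.mpr ⟨hγ, Finset.mem_univ _⟩⟩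
  set a : ℝ := Nf α₀ with ha
  set b : ℝ := Nf β₀ with hb
  set Mb : Fin m → ℝ := fun α => if α = α₀ then b else a with hMb
  have hMb_bound : ∀ α β, β ≠ α → Nf β ≤ Mb α := by
    intro α β hβα
    simp only [hMb]
    by_cases hα : α = α₀
    · subst hα
      rw [if_pos rfl]
      exact hβ₀max β (Finset.mem_erase.mpr ⟨hβα, Finset.mem_univ _⟩)
    · rw [if_neg hα]
      exact hα₀max β (Finset.mem_univ _)
  have hMb0 : ∀ α, 0 ≤ Mb α := by
    intro α
    simp only [hMb]
    by_cases hα : α = α₀ <;> simp [hα, hNf0 α₀, hNf0 β₀, hb, ha]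
  -- per-α estimate
  have hper : ∀ α, ∑ β ∈ Finset.univ.erase α, nsq (A α * A β - A β * A α)
      ≤ Nf α * ((∑ β ∈ Finset.univ.erase α, Nf β) + Mb α) := by
    intro α
    have hsub : ∀ f : Fin m → ℝ,
        ∑ β ∈ Finset.univ.erase α, f β = ∑ c : {β : Fin m // β ≠ α}, f c.val := by
      intro f
      exact Finset.sum_subtype (Finset.univ.erase α)
        (fun x => by simp [Finset.mem_erase]) f
    have hcore := core (A α) (hsym α) (fun c : {β : Fin m // β ≠ α} => A c.val)
      (fun c => hsym c.val)
      (fun c d hcd => horth c.val d.val (fun h => hcd (Subtype.ext h)))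
      (Mb α) (hMb0 α) (fun c => hMb_bound α c.val c.prop)
    rw [hsub (fun β => nsq (A α * A β - A β * A α)), hsub Nf]
    exact hcore
  -- facts about a, b, T
  have hba : b ≤ a := hα₀max β₀ (Finset.mem_univ _)
  have ha0 : 0 ≤ a := hNf0 α₀
  have hb0 : 0 ≤ b := hNf0 β₀
  have herase_sum : ∑ α ∈ Finset.univ.erase α₀, Nf α = T - a := by
    rw [Finset.sum_erase_eq_sub hα₀mem, ← hT, ← ha]
  have hbTa : b ≤ T - a := by
    rw [← herase_sum]
    exact Finset.single_le_sum (fun β _ => hNf0 β) hβ₀mem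
  have haT : a ≤ T := by
    rw [hT]
    exact Finset.single_le_sum (fun β _ => hNf0 β) (Finset.mem_univ α₀)
  -- sum of Nf * Mb
  have hsplitMb : ∑ α, Nf α * Mb α = (T - a) * a + a * b := by
    rw [← Finset.sum_erase_add Finset.univ _ hα₀mem]
    have e1 : ∑ α ∈ Finset.univ.erase α₀, Nf α * Mb α
        = ∑ α ∈ Finset.univ.erase α₀, Nf α * a := by
      refine Finset.sum_congr rfl fun α hα => ?_
      simp only [hMb]
      rw [if_neg (Finset.mem_erase.mp hα).1]
    have e2 : Nf α₀ * Mb α₀ = a * b := by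
      simp only [hMb]
      simp [ha]
    rw [e1, e2, ← Finset.sum_mul, herase_sum]
  have hscalar : (T - a) * a + a * b ≤ T^2 / 2 := by
    rcases le_or_gt (2*a) T with h | h
    · nlinarith
    · nlinarith
  -- total erase sums
  have herase : ∀ α, ∑ β ∈ Finset.univ.erase α, Nf β = T - Nf α := by
    intro α
    rw [Finset.sum_erase_eq_sub (Finset.mem_univ α), ← hT]
  have htot : ∑ α, ∑ β ∈ Finset.univ.erase α, nsq (A α * A β - A β * A α)
      ≤ T^2 - (∑ α, (Nf α)^2) + T^2/2 := by
    have h1 : ∑ α, ∑ β ∈ Finset.univ.erase α, nsq (A α * A β - A β * A α)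
        ≤ ∑ α, Nf α * ((T - Nf α) + Mb α) := by
      refine Finset.sum_le_sum fun α _ => ?_
      have := hper α
      rwa [herase α] at this
    have h2 : ∑ α, Nf α * ((T - Nf α) + Mb α)
        = T^2 - (∑ α, (Nf α)^2) + ∑ α, Nf α * Mb α := by
      have e : ∀ α, Nf α * ((T - Nf α) + Mb α)
          = Nf α * T - (Nf α)^2 + Nf α * Mb α := by intro α; ring
      simp only [e]
      rw [Finset.sum_add_distrib, Finset.sum_sub_distrib]
      have e2 : ∑ α, Nf α * T = T^2 := by
        rw [← Finset.sum_mul, ← hT]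
        ring
      rw [e2]
    have h3 : ∑ α, Nf α * Mb α ≤ T^2/2 := by rw [hsplitMb]; exact hscalar
    calc ∑ α, ∑ β ∈ Finset.univ.erase α, nsq (A α * A β - A β * A α)
        ≤ ∑ α, Nf α * ((T - Nf α) + Mb α) := h1
    _ = T^2 - (∑ α, (Nf α)^2) + ∑ α, Nf α * Mb α := h2
    _ ≤ T^2 - (∑ α, (Nf α)^2) + T^2/2 := by linarith
  have hQ : ∑ α, (Nf α)^2 ≤ T^2 := by
    have h1 : ∀ α, (Nf α)^2 ≤ Nf α * T := by
      intro α
      have : Nf α ≤ T := by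
        rw [hT]; exact Finset.single_le_sum (fun β _ => hNf0 β) (Finset.mem_univ α)
      nlinarith [hNf0 α]
    calc ∑ α, (Nf α)^2 ≤ ∑ α, Nf α * T := Finset.sum_le_sum fun α _ => h1 α
    _ = T^2 := by rw [← Finset.sum_mul, ← hT]; ring
  linarith [htot]


lemma ip_sum_sum {ι κ : Type*} [Fintype ι] [Fintype κ] (c : ι → ℝ) (d : κ → ℝ)
    (X : ι → Matrix (Fin n) (Fin n) ℝ) (Y : κ → Matrix (Fin n) (Fin n) ℝ) :
    ip (∑ t, c t • X t) (∑ u, d u • Y u) = ∑ t, ∑ u, c t * d u * ip (X t) (Y u) := by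
  simp only [ip]
  have e1 : ∀ i j, (∑ t, c t • X t) i j * (∑ u, d u • Y u) i j
      = ∑ t, ∑ u, c t * d u * (X t i j * Y u i j) := by
    intro i j
    rw [Matrix.sum_apply, Matrix.sum_apply, Finset.sum_mul_sum]
    refine Finset.sum_congr rfl fun t _ => Finset.sum_congr rfl fun u _ => ?_
    simp [Matrix.smul_apply]
    ring
  simp only [e1]
  -- now swap : ∑ i ∑ j ∑ t ∑ u → ∑ t ∑ u ∑ i ∑ j
  rw [Finset.sum_comm]
  have e2 : ∀ j, ∑ i, ∑ t, ∑ u, c t * d u * (X t i j * Y u i j)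
      = ∑ t, ∑ u, c t * d u * ∑ i, X t i j * Y u i j := by
    intro j
    rw [Finset.sum_comm]
    refine Finset.sum_congr rfl fun t _ => ?_
    rw [Finset.sum_comm]
    refine Finset.sum_congr rfl fun u _ => ?_
    rw [Finset.mul_sum]
  simp only [e2]
  rw [Finset.sum_comm]
  refine Finset.sum_congr rfl fun t _ => ?_
  rw [Finset.sum_comm]
  refine Finset.sum_congr rfl fun u _ => ?_
  rw [← Finset.mul_sum]
  congr 1
  rw [Finset.sum_comm]

lemma trace_mul_symm (X Y : Matrix (Fin n) (Fin n) ℝ) (hY : Y.IsSymm) :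
    Matrix.trace (X * Y) = ip X Y := by
  simp only [Matrix.trace, Matrix.diag, Matrix.mul_apply, ip]
  refine Finset.sum_congr rfl fun i _ => Finset.sum_congr rfl fun j _ => ?_
  rw [hY.apply i j]


lemma nsq_def (X : Matrix (Fin n) (Fin n) ℝ) : nsq X = ip X X := rfl

theorem main {m : ℕ} (hm : 2 ≤ m) (A : Fin m → Matrix (Fin n) (Fin n) ℝ)
    (hsymm : ∀ α, (A α).IsSymm) :
    (∑ α, ∑ β ∈ Finset.univ.erase α, nsq (A α * A β - A β * A α))
      + ∑ α, ∑ β, (ip (A α) (A β))^2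
      ≤ (3/2) * (∑ α, nsq (A α))^2 := by
  classical
  set S : Matrix (Fin m) (Fin m) ℝ := Matrix.of (fun α β => ip (A α) (A β)) with hSdef
  have hSapp : ∀ α β, S α β = ip (A α) (A β) := fun α β => rfl
  have hSsymm : S.IsSymm := by
    rw [Matrix.IsSymm]
    ext α β
    rw [Matrix.transpose_apply, hSapp, hSapp, ip_comm]
  obtain ⟨V, mu, hV1, hV2, hVdiag⟩ := real_spectral S hSsymm
  set B : Fin m → Matrix (Fin n) (Fin n) ℝ := fun γ => ∑ α, V α γ • A α with hBdef
  have hrow : ∀ α α', ∑ γ, V α γ * V α' γ = if α = α' then (1:ℝ) else 0 := by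
    intro α α'
    have h : (V * Vᵀ) α α' = (1 : Matrix (Fin m) (Fin m) ℝ) α α' := by rw [hV2]
    rw [Matrix.mul_apply] at h
    simp only [Matrix.transpose_apply] at h
    rw [h, Matrix.one_apply]
  have hipB : ∀ γ δ, ip (B γ) (B δ) = (Vᵀ * S * V) γ δ := by
    intro γ δ
    simp only [hBdef]
    rw [ip_sum_sum]
    rw [Matrix.mul_apply]
    have e : ∀ β, (Vᵀ * S) γ β = ∑ α, V α γ * S α β := by
      intro β
      rw [Matrix.mul_apply]
      refine Finset.sum_congr rfl fun α _ => ?_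
      rw [Matrix.transpose_apply]
    simp only [e]
    rw [Finset.sum_comm]
    refine Finset.sum_congr rfl fun β _ => ?_
    rw [Finset.sum_mul]
    refine Finset.sum_congr rfl fun α _ => ?_
    rw [hSapp]
    ring
  have horthB : ∀ γ δ, γ ≠ δ → ip (B γ) (B δ) = 0 := by
    intro γ δ h
    rw [hipB, hVdiag, Matrix.diagonal_apply_ne mu h]
  have hBsym : ∀ γ, (B γ).IsSymm := by
    intro γ
    rw [Matrix.IsSymm]
    simp only [hBdef]
    rw [Matrix.transpose_sum]
    refine Finset.sum_congr rfl fun α _ => ?_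
    rw [Matrix.transpose_smul, (hsymm α).eq]
  -- sum of norms preserved
  have hnormsum : ∑ γ, nsq (B γ) = ∑ α, nsq (A α) := by
    have h1 : ∀ γ, nsq (B γ) = (Vᵀ * S * V) γ γ := fun γ => hipB γ γ
    have h2 : Matrix.trace (Vᵀ * S * V) = Matrix.trace S := by
      rw [Matrix.trace_mul_cycle, hV2, Matrix.one_mul]
    simp only [h1]
    have h3 : ∑ γ, (Vᵀ * S * V) γ γ = Matrix.trace (Vᵀ * S * V) := rfl
    rw [h3, h2]
    rfl
  -- trace squares preserved
  have htrsq : ∑ γ, ∑ δ, (ip (B γ) (B δ))^2 = ∑ α, ∑ β, (ip (A α) (A β))^2 := by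
    have h1 : ∑ γ, ∑ δ, (ip (B γ) (B δ))^2 = nsq (Vᵀ * S * V) := by
      rw [nsq_eq_sum_sq]
      exact Finset.sum_congr rfl fun γ _ => Finset.sum_congr rfl fun δ _ => by rw [hipB]
    have h2 : nsq (Vᵀ * S * V) = nsq S := ip_conj hV1 hV2
    rw [h1, h2, nsq_eq_sum_sq]
    exact Finset.sum_congr rfl fun α _ => Finset.sum_congr rfl fun β _ => by rw [hSapp]
  -- commutator sums preserved
  set W : Fin m → Fin m → Matrix (Fin n) (Fin n) ℝ :=
    fun α β => A α * A β - A β * A α with hW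
  have hmul : ∀ γ δ, B γ * B δ
      = ∑ p : Fin m × Fin m, (V p.1 γ * V p.2 δ) • (A p.1 * A p.2) := by
    intro γ δ
    simp only [hBdef]
    rw [Finset.sum_mul, Fintype.sum_prod_type]
    refine Finset.sum_congr rfl fun α _ => ?_
    rw [Finset.mul_sum]
    refine Finset.sum_congr rfl fun β _ => ?_
    rw [smul_mul_assoc, mul_smul_comm, smul_smul]
  have hcommB : ∀ γ δ, B γ * B δ - B δ * B γ
      = ∑ p : Fin m × Fin m, (V p.1 γ * V p.2 δ) • W p.1 p.2 := by
    intro γ δ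
    rw [hmul γ δ, hmul δ γ]
    have hswap : ∑ p : Fin m × Fin m, (V p.1 δ * V p.2 γ) • (A p.1 * A p.2)
        = ∑ p : Fin m × Fin m, (V p.1 γ * V p.2 δ) • (A p.2 * A p.1) := by
      refine Fintype.sum_equiv (Equiv.prodComm (Fin m) (Fin m))
        (fun p => (V p.1 δ * V p.2 γ) • (A p.1 * A p.2))
        (fun p => (V p.1 γ * V p.2 δ) • (A p.2 * A p.1)) ?_
      intro p
      simp only [Equiv.prodComm_apply, Prod.fst_swap, Prod.snd_swap]
      rw [mul_comm (V p.1 δ) (V p.2 γ)]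
    rw [hswap, ← Finset.sum_sub_distrib]
    refine Finset.sum_congr rfl fun p _ => ?_
    simp only [hW, smul_sub]
  have hcommsum : ∑ γ, ∑ δ, nsq (B γ * B δ - B δ * B γ)
      = ∑ α, ∑ β, nsq (W α β) := by
    have h1 : ∀ γ δ, nsq (B γ * B δ - B δ * B γ)
        = ∑ p : Fin m × Fin m, ∑ q : Fin m × Fin m,
            (V p.1 γ * V p.2 δ) * (V q.1 γ * V q.2 δ) * ip (W p.1 p.2) (W q.1 q.2) := by
      intro γ δ
      rw [nsq_def, hcommB γ δ, ip_sum_sum]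
    simp only [h1]
    have stage1 : ∀ γ, ∑ δ, ∑ p : Fin m × Fin m, ∑ q : Fin m × Fin m,
          (V p.1 γ * V p.2 δ) * (V q.1 γ * V q.2 δ) * ip (W p.1 p.2) (W q.1 q.2)
        = ∑ p : Fin m × Fin m, ∑ q : Fin m × Fin m,
            (V p.1 γ * V q.1 γ) * ((∑ δ, V p.2 δ * V q.2 δ) * ip (W p.1 p.2) (W q.1 q.2)) := by
      intro γ
      rw [Finset.sum_comm]
      refine Finset.sum_congr rfl fun p _ => ?_
      rw [Finset.sum_comm]
      refine Finset.sum_congr rfl fun q _ => ?_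
      have e : ∀ δ, (V p.1 γ * V p.2 δ) * (V q.1 γ * V q.2 δ) * ip (W p.1 p.2) (W q.1 q.2)
          = (V p.1 γ * V q.1 γ * ip (W p.1 p.2) (W q.1 q.2)) * (V p.2 δ * V q.2 δ) :=
        fun δ => by ring
      simp only [e]
      rw [← Finset.mul_sum]
      ring
    simp only [stage1]
    have stage2 : ∑ γ, ∑ p : Fin m × Fin m, ∑ q : Fin m × Fin m,
          (V p.1 γ * V q.1 γ) * ((∑ δ, V p.2 δ * V q.2 δ) * ip (W p.1 p.2) (W q.1 q.2))
        = ∑ p : Fin m × Fin m, ∑ q : Fin m × Fin m,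
            (∑ γ, V p.1 γ * V q.1 γ) * ((∑ δ, V p.2 δ * V q.2 δ) * ip (W p.1 p.2) (W q.1 q.2)) := by
      rw [Finset.sum_comm]
      refine Finset.sum_congr rfl fun p _ => ?_
      rw [Finset.sum_comm]
      refine Finset.sum_congr rfl fun q _ => ?_
      rw [← Finset.sum_mul]
    rw [stage2]
    have collapse : ∑ p : Fin m × Fin m, ∑ q : Fin m × Fin m,
          (∑ γ, V p.1 γ * V q.1 γ) * ((∑ δ, V p.2 δ * V q.2 δ) * ip (W p.1 p.2) (W q.1 q.2))
        = ∑ p : Fin m × Fin m, nsq (W p.1 p.2) := by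
      refine Finset.sum_congr rfl fun p _ => ?_
      rw [Finset.sum_eq_single p]
      · rw [hrow, hrow, if_pos rfl, if_pos rfl, nsq_def]
        ring
      · intro q _ hqp
        by_cases h1 : p.1 = q.1
        · have h2 : p.2 ≠ q.2 := fun h2' => hqp (Prod.ext h1 h2').symm
          rw [hrow p.2 q.2, if_neg h2]
          ring
        · rw [hrow p.1 q.1, if_neg h1]
          ring
      · intro hp
        exact absurd (Finset.mem_univ p) hp
    rw [collapse, Fintype.sum_prod_type]
  -- erase vs full sums
  have hdiagW : ∀ α : Fin m, nsq (W α α) = 0 := by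
    intro α
    simp only [hW]
    rw [sub_self]
    exact nsq_zero
  have heraseA : ∑ α, ∑ β ∈ Finset.univ.erase α, nsq (W α β) = ∑ α, ∑ β, nsq (W α β) := by
    refine Finset.sum_congr rfl fun α _ => ?_
    rw [← Finset.sum_erase_add Finset.univ _ (Finset.mem_univ α), hdiagW α, add_zero]
  have hdiagB : ∀ γ, nsq (B γ * B γ - B γ * B γ) = 0 := by
    intro γ
    rw [sub_self]
    exact nsq_zero
  have heraseB : ∑ γ, ∑ δ ∈ Finset.univ.erase γ, nsq (B γ * B δ - B δ * B γ)
      = ∑ γ, ∑ δ, nsq (B γ * B δ - B δ * B γ) := by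
    refine Finset.sum_congr rfl fun γ _ => ?_
    rw [← Finset.sum_erase_add Finset.univ _ (Finset.mem_univ γ), hdiagB γ, add_zero]
  have hipdiag : ∑ γ, ∑ δ, (ip (B γ) (B δ))^2 = ∑ γ, (nsq (B γ))^2 := by
    refine Finset.sum_congr rfl fun γ _ => ?_
    rw [← Finset.sum_erase_add Finset.univ _ (Finset.mem_univ γ)]
    have hz : ∑ δ ∈ Finset.univ.erase γ, (ip (B γ) (B δ))^2 = 0 := by
      refine Finset.sum_eq_zero fun δ hδ => ?_
      rw [horthB γ δ (Ne.symm (Finset.mem_erase.mp hδ).1)]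
      norm_num
    rw [hz, zero_add, nsq_def]
  have horth_ineq := orth_case hm B hBsym horthB
  calc (∑ α, ∑ β ∈ Finset.univ.erase α, nsq (W α β)) + ∑ α, ∑ β, (ip (A α) (A β))^2
      = (∑ γ, ∑ δ ∈ Finset.univ.erase γ, nsq (B γ * B δ - B δ * B γ))
        + ∑ γ, (nsq (B γ))^2 := by
        rw [heraseA, ← hcommsum, ← heraseB, ← htrsq, hipdiag]
  _ ≤ (3/2) * (∑ γ, nsq (B γ))^2 := horth_ineq
  _ = (3/2) * (∑ α, nsq (A α))^2 := by rw [hnormsum]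

end LiLi

/-- For real symmetric `n × n` matrices `A₁, …, A_m` (with `m ≥ 2`), one has
`∑_{α ≠ β} ‖[A_α, A_β]‖² + ∑_{α,β} (tr (A_α A_β))² ≤ (3/2) (∑_α ‖A_α‖²)²`,
where `‖·‖` is the Frobenius norm. -/
theorem commutator_trace_frobenius_ineq (n m : ℕ) (hn : 1 ≤ n) (hm : 2 ≤ m)
    (A : Fin m → Matrix (Fin n) (Fin n) ℝ)
    (hsymm : ∀ α, (A α).IsSymm) :
    (∑ α : Fin m, ∑ β ∈ Finset.univ.erase α,
        ∑ i : Fin n, ∑ j : Fin n, ((A α * A β - A β * A α) i j) ^ 2)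
      + ∑ α : Fin m, ∑ β : Fin m, (Matrix.trace (A α * A β)) ^ 2
      ≤ (3 / 2) * (∑ α : Fin m, ∑ i : Fin n, ∑ j : Fin n, (A α i j) ^ 2) ^ 2 := by
  have h := LiLi.main hm A hsymm
  have e1 : ∀ α β : Fin m, ∑ i : Fin n, ∑ j : Fin n, ((A α * A β - A β * A α) i j)^2
      = LiLi.nsq (A α * A β - A β * A α) := fun α β => (LiLi.nsq_eq_sum_sq _).symm
  have e2 : ∀ α β : Fin m, Matrix.trace (A α * A β) = LiLi.ip (A α) (A β) :=
    fun α β => LiLi.trace_mul_symm _ _ (hsymm β)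
  have e3 : ∀ α : Fin m, ∑ i : Fin n, ∑ j : Fin n, (A α i j)^2 = LiLi.nsq (A α) :=
    fun α => (LiLi.nsq_eq_sum_sq _).symm
  simp only [e1, e2, e3]
  exact h
end

section
/- Let Ω ⊆ ℝⁿ be open and let u : Ω → ℝ be a C² solution of the graphic translator equation on Ω. Set v(x) = √(1 + |∇u(x)|²) and define the C¹ vector field Y : Ω × ℝ → ℝ^{n+1} by Y(x, t) = e^{t}·(−∇u(x)/v(x), 1/v(x)), i.e. Yⁱ(x,t) = −e^{t} ∂_i u(x)/v(x) for 1 ≤ i ≤ n and Y^{n+1}(x,t) = e^{t}/v(x). Then Y is divergence-free on Ω × ℝ: Σ_{k=1}^{n+1} ∂_k Y^k = 0. -/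
/-- For a nonzero constant `c`, `fderiv` commutes with multiplication by `c`,
with no differentiability hypothesis. -/
lemma fderiv_const_mul_of_ne {E : Type*} [NormedAddCommGroup E] [NormedSpace ℝ E]
    (f : E → ℝ) (c : ℝ) (hc : c ≠ 0) (x : E) :
    fderiv ℝ (fun y => c * f y) x = c • fderiv ℝ f x := by
  by_cases hf : DifferentiableAt ℝ f x
  · exact fderiv_const_mul hf c
  · have h2 : ¬ DifferentiableAt ℝ (fun y => c * f y) x := by
      intro h
      have : DifferentiableAt ℝ (fun y => c⁻¹ * (c * f y)) x := h.const_mul _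
      simp only [← mul_assoc, inv_mul_cancel₀ hc, one_mul] at this
      exact hf this
    rw [fderiv_zero_of_not_differentiableAt hf, fderiv_zero_of_not_differentiableAt h2,
      smul_zero]

/-- If `u` is a `C²` solution of the graphic translator equation
`∑ᵢ ∂ᵢ(∂ᵢu / √(1+|∇u|²)) = 1/√(1+|∇u|²)` on an open set `Ω ⊆ ℝⁿ`, then the vector field
`Y(x,t) = eᵗ · (−∇u(x)/v(x), 1/v(x))` on `Ω × ℝ` (with `v = √(1+|∇u|²)`) is divergence-free:
the sum of the `x`-derivatives `∂ᵢYⁱ` (for `1 ≤ i ≤ n`) and the `t`-derivative of the last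
component `Y^{n+1}` vanishes. -/
theorem graphic_translator_calibration_div_free
    (n : ℕ) (Ω : Set (Fin n → ℝ)) (hΩ : IsOpen Ω)
    (u : (Fin n → ℝ) → ℝ) (hu : ContDiffOn ℝ 2 u Ω)
    (v : (Fin n → ℝ) → ℝ)
    (hv : ∀ x, v x = Real.sqrt (1 + ∑ i, (fderiv ℝ u x (Pi.single i 1)) ^ 2))
    (heq : ∀ x ∈ Ω,
      ∑ i, fderiv ℝ (fun y => fderiv ℝ u y (Pi.single i 1) / v y) x (Pi.single i 1)
        = 1 / v x) :
    ∀ x ∈ Ω, ∀ t : ℝ,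
      (∑ i, fderiv ℝ (fun y => Real.exp t * (-(fderiv ℝ u y (Pi.single i 1)) / v y)) x
          (Pi.single i 1))
        + deriv (fun s : ℝ => Real.exp s / v x) t = 0 := by
  intro x hx t
  have hterm : ∀ i, fderiv ℝ (fun y => Real.exp t * (-(fderiv ℝ u y (Pi.single i 1)) / v y)) x
      (Pi.single i 1)
      = -Real.exp t * fderiv ℝ (fun y => fderiv ℝ u y (Pi.single i 1) / v y) x (Pi.single i 1) := by
    intro i
    have : (fun y => Real.exp t * (-(fderiv ℝ u y (Pi.single i 1)) / v y))
        = fun y => (-Real.exp t) * (fderiv ℝ u y (Pi.single i 1) / v y) := by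
      funext y; ring
    rw [this, fderiv_const_mul_of_ne _ (-Real.exp t) (neg_ne_zero.mpr (Real.exp_ne_zero t)) x]
    simp
  have hderiv : deriv (fun s : ℝ => Real.exp s / v x) t = Real.exp t / v x := by
    simp [div_eq_mul_inv, Real.deriv_exp]
  rw [hderiv]
  simp only [hterm, ← Finset.mul_sum, heq x hx]
  field_simp
  ring
end

section
/- Let V ∈ ℝⁿ and let f : ℝⁿ → ℝ be a C² function such that f(x)/|x| → 0 as |x| → ∞. Then there exists a sequence (x_k) in ℝⁿ such that f(x_k) → sup_{ℝⁿ} f (as an extended real number), |∇f(x_k)| → 0, and limsup_{k→∞} (Δf(x_k) + ⟨V, ∇f(x_k)⟩) ≤ 0. -/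
set_option maxHeartbeats 2000000


open Filter
open scoped RealInnerProductSpace

open Set Topology in
/-- If a `C¹` function `g : ℝ → ℝ` has a local maximum at `0` and its derivative
is differentiable at `0`, then the second derivative at `0` is nonpositive. -/
lemma secondDeriv_nonpos_of_isLocalMax' {g g' : ℝ → ℝ} {c : ℝ}
    (hmax : IsLocalMax g 0) (hg : ∀ t, HasDerivAt g (g' t) t)
    (hg' : HasDerivAt g' c 0) : c ≤ 0 := by
  by_contra hc
  push_neg at hc
  have h0 : g' 0 = 0 := hmax.hasDerivAt_eq_zero (hg 0)
  have hslope : Tendsto (fun t => g' t / t) (𝓝[>] (0:ℝ)) (𝓝 c) := by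
    have h1 := hasDerivAt_iff_tendsto_slope.mp hg'
    have h2 : Tendsto (slope g' 0) (𝓝[>] (0:ℝ)) (𝓝 c) :=
      h1.mono_left (nhdsWithin_mono _ (fun t ht => ne_of_gt ht))
    refine h2.congr (fun t => ?_)
    simp [slope, h0]; ring
  have hpos : ∀ᶠ t in 𝓝[>] (0:ℝ), 0 < g' t := by
    filter_upwards [hslope.eventually (eventually_gt_nhds hc), self_mem_nhdsWithin]
      with t ht ht'
    have ht'' : (0:ℝ) < t := ht'
    have := mul_pos ht ht''
    rwa [div_mul_cancel₀ _ (ne_of_gt ht'')] at this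
  obtain ⟨δ, hδmem, hδ⟩ := mem_nhdsGT_iff_exists_Ioo_subset.mp hpos
  have hδpos : (0:ℝ) < δ := hδmem
  have hmono : StrictMonoOn g (Icc 0 δ) := by
    refine strictMonoOn_of_deriv_pos (convex_Icc 0 δ)
      (fun t _ => (hg t).continuousAt.continuousWithinAt) (fun t ht => ?_)
    rw [interior_Icc] at ht
    rw [(hg t).deriv]
    exact hδ ht
  have hgt : ∀ᶠ t in 𝓝[>] (0:ℝ), g 0 < g t := by
    filter_upwards [Ioo_mem_nhdsGT hδpos] with t ht
    exact hmono ⟨le_rfl, hδpos.le⟩ ⟨ht.1.le, ht.2.le⟩ ht.1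
  have hle : ∀ᶠ t in 𝓝[>] (0:ℝ), g t ≤ g 0 := hmax.filter_mono nhdsWithin_le_nhds
  obtain ⟨t, h1, h2⟩ := (hgt.and hle).exists
  exact absurd h2 (not_le.mpr h1)

open Set Topology in
/-- Derivatives of `t ↦ √(b + 2at + t²)`: the first derivative is
`(a+t)/√(b + 2at + t²)` and the second derivative at `0` is at most `1`. -/
lemma sqrt_quad' (a b : ℝ) (hb : 1 + a^2 ≤ b) :
    ∃ c ≤ 1, (∀ t, HasDerivAt (fun s => Real.sqrt (b + 2*a*s + s^2))
        ((a + t) / Real.sqrt (b + 2*a*t + t^2)) t)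
      ∧ HasDerivAt (fun t => (a + t) / Real.sqrt (b + 2*a*t + t^2)) c 0 := by
  have hppos : ∀ t : ℝ, (0:ℝ) < b + 2*a*t + t^2 := by
    intro t; nlinarith [sq_nonneg (a + t)]
  have hp : ∀ t : ℝ, HasDerivAt (fun s => b + 2*a*s + s^2) (2*a + 2*t) t := by
    intro t
    have h1 : HasDerivAt (fun s : ℝ => b + 2*a*s + s^2) (0 + 2*a*1 + (2:ℕ)*t^(2-1)) t :=
      (((hasDerivAt_const t b).add ((hasDerivAt_id t).const_mul (2*a))).add
        (hasDerivAt_pow 2 t))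
    convert h1 using 1; push_cast; ring
  have hsq : ∀ t : ℝ, HasDerivAt (fun s => Real.sqrt (b + 2*a*s + s^2))
      ((a + t) / Real.sqrt (b + 2*a*t + t^2)) t := by
    intro t
    have h2 := (Real.hasDerivAt_sqrt (ne_of_gt (hppos t))).comp t (hp t)
    have hs : Real.sqrt (b + 2*a*t + t^2) ≠ 0 :=
      ne_of_gt (Real.sqrt_pos.mpr (hppos t))
    refine h2.congr_deriv ?_
    field_simp
  have hb0 : (0:ℝ) < b := by nlinarith [sq_nonneg a]
  have hsb : (1:ℝ) ≤ Real.sqrt b := by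
    rw [show (1:ℝ) = Real.sqrt 1 by simp]
    exact Real.sqrt_le_sqrt (by nlinarith [sq_nonneg a])
  have hsb0 : Real.sqrt b ≠ 0 := by positivity
  have hden : HasDerivAt (fun t => Real.sqrt (b + 2*a*t + t^2))
      ((a + 0) / Real.sqrt (b + 2*a*0 + 0^2)) 0 := hsq 0
  have hnum : HasDerivAt (fun t : ℝ => a + t) 1 0 := (hasDerivAt_id 0).const_add a
  have hne : Real.sqrt (b + 2*a*0 + 0^2) ≠ 0 := by
    simpa using ne_of_gt (Real.sqrt_pos.mpr (hppos 0))
  have hdiv := hnum.div hden hne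
  refine ⟨_, ?_, hsq, hdiv⟩
  have e0 : b + 2*a*0 + 0^2 = b := by ring
  rw [e0]
  have hsq2 : Real.sqrt b ^ 2 = b := Real.sq_sqrt hb0.le
  rw [div_le_one (pow_pos (lt_of_lt_of_le one_pos hsb) 2)]
  have h3 : 0 ≤ (a + 0) * ((a + 0) / Real.sqrt b) := by
    have he : (a + 0) * ((a + 0) / Real.sqrt b) = a^2 / Real.sqrt b := by ring
    rw [he]; positivity
  nlinarith [hsb, hsq2]

open Set Topology in
/-- A continuous sublinear function penalized by `ε√(1 + ‖·‖²)` attains a global maximum. -/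
lemma exists_max_point' (n : ℕ) (f : EuclideanSpace ℝ (Fin n) → ℝ)
    (hcont : Continuous f)
    (hgrowth : Tendsto (fun x => f x / ‖x‖) (cocompact (EuclideanSpace ℝ (Fin n))) (nhds 0))
    (ε : ℝ) (hε : 0 < ε) :
    ∃ x₀, ∀ y, f y - ε * Real.sqrt (1 + ‖y‖^2) ≤ f x₀ - ε * Real.sqrt (1 + ‖x₀‖^2) := by
  have hφcont : Continuous fun x : EuclideanSpace ℝ (Fin n) => Real.sqrt (1 + ‖x‖^2) :=
    Real.continuous_sqrt.comp (continuous_const.add (continuous_norm.pow 2))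
  have hFcont : Continuous fun x : EuclideanSpace ℝ (Fin n) =>
      f x - ε * Real.sqrt (1 + ‖x‖^2) := hcont.sub (continuous_const.mul hφcont)
  have hbound : Tendsto (fun x : EuclideanSpace ℝ (Fin n) => ‖x‖ * (f x / ‖x‖ - ε))
      (cocompact _) atBot := by
    refine Tendsto.atTop_mul_neg (show -ε < 0 by linarith) tendsto_norm_cocompact_atTop ?_
    simpa using hgrowth.sub_const ε
  have hF : Tendsto (fun x : EuclideanSpace ℝ (Fin n) => f x - ε * Real.sqrt (1 + ‖x‖^2))
      (cocompact _) atBot := by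
    refine tendsto_atBot_mono' _ ?_ hbound
    filter_upwards [tendsto_norm_cocompact_atTop.eventually_ge_atTop 1] with x hx
    have hx0 : ‖x‖ ≠ 0 := by linarith
    have h1 : ‖x‖ * (f x / ‖x‖) = f x := by field_simp
    have h2 : ‖x‖ ≤ Real.sqrt (1 + ‖x‖^2) := by
      have h2' := Real.sqrt_le_sqrt (show ‖x‖^2 ≤ 1 + ‖x‖^2 by linarith)
      rwa [Real.sqrt_sq (norm_nonneg x)] at h2'
    have : ε * ‖x‖ ≤ ε * Real.sqrt (1 + ‖x‖^2) := by nlinarith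
    calc f x - ε * Real.sqrt (1 + ‖x‖^2) ≤ f x - ε * ‖x‖ := by linarith
      _ = ‖x‖ * (f x / ‖x‖ - ε) := by rw [mul_sub, h1]; ring
  exact hFcont.exists_forall_ge hF

open Set Topology in
/-- At a maximum point of `f - ε√(1 + ‖·‖²)` the gradient of `f` has norm at most `ε`. -/
lemma grad_bound' (n : ℕ) (f : EuclideanSpace ℝ (Fin n) → ℝ) (hf : ContDiff ℝ 2 f)
    (ε : ℝ) (hε : 0 < ε) (x₀ : EuclideanSpace ℝ (Fin n))
    (hmax : ∀ y, f y - ε * Real.sqrt (1 + ‖y‖^2) ≤ f x₀ - ε * Real.sqrt (1 + ‖x₀‖^2)) :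
    ‖gradient f x₀‖ ≤ ε := by
  have hq : HasFDerivAt (fun x : EuclideanSpace ℝ (Fin n) => 1 + ‖x‖^2)
      (2 • (innerSL ℝ x₀).comp (ContinuousLinearMap.id ℝ _)) x₀ :=
    ((hasFDerivAt_id x₀).norm_sq).const_add 1
  have hqpos : (0:ℝ) < 1 + ‖x₀‖^2 := by positivity
  have hsme : Real.sqrt (1 + ‖x₀‖^2) ≠ 0 := ne_of_gt (Real.sqrt_pos.mpr hqpos)
  have hφ : HasFDerivAt (fun x : EuclideanSpace ℝ (Fin n) => Real.sqrt (1 + ‖x‖^2))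
      ((1 / (2 * Real.sqrt (1 + ‖x₀‖^2))) •
        (2 • (innerSL ℝ x₀).comp (ContinuousLinearMap.id ℝ _))) x₀ :=
    (Real.hasDerivAt_sqrt (ne_of_gt hqpos)).comp_hasFDerivAt x₀ hq
  set Φ : EuclideanSpace ℝ (Fin n) →L[ℝ] ℝ :=
    (1 / (2 * Real.sqrt (1 + ‖x₀‖^2))) •
      (2 • (innerSL ℝ x₀).comp (ContinuousLinearMap.id ℝ _)) with hΦ
  have hΦnorm : ‖Φ‖ ≤ 1 := by
    refine ContinuousLinearMap.opNorm_le_bound _ zero_le_one fun v => ?_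
    have hx2 : ‖x₀‖ ≤ Real.sqrt (1 + ‖x₀‖^2) := by
      have h2' := Real.sqrt_le_sqrt (show ‖x₀‖^2 ≤ 1 + ‖x₀‖^2 by linarith)
      rwa [Real.sqrt_sq (norm_nonneg x₀)] at h2'
    have happ : Φ v = (1 / (2 * Real.sqrt (1 + ‖x₀‖^2))) * (2 * ⟪x₀, v⟫) := by
      simp [hΦ, two_smul]
      ring
    rw [happ]
    have hCS := abs_real_inner_le_norm x₀ v
    rw [Real.norm_eq_abs, abs_mul, abs_mul]
    have hs1 : (1:ℝ) ≤ Real.sqrt (1 + ‖x₀‖^2) := by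
      have := Real.sqrt_le_sqrt (show (1:ℝ) ≤ 1 + ‖x₀‖^2 by nlinarith [sq_nonneg ‖x₀‖])
      simpa using this
    have h1 : |1 / (2 * Real.sqrt (1 + ‖x₀‖^2))| = 1 / (2 * Real.sqrt (1 + ‖x₀‖^2)) := by
      rw [abs_of_pos]; positivity
    rw [h1, abs_two, div_mul_eq_mul_div, one_mul, div_le_iff₀ (by positivity)]
    nlinarith [hCS, hx2, norm_nonneg v, norm_nonneg x₀, abs_nonneg (⟪x₀, v⟫)]
  have hdf : HasFDerivAt f (fderiv ℝ f x₀) x₀ :=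
    ((hf.differentiable (by norm_num)) x₀).hasFDerivAt
  have hFd : HasFDerivAt (fun x => f x - ε * Real.sqrt (1 + ‖x‖^2))
      (fderiv ℝ f x₀ - ε • Φ) x₀ := hdf.sub (hφ.const_mul ε)
  have hlm : IsLocalMax (fun x => f x - ε * Real.sqrt (1 + ‖x‖^2)) x₀ :=
    Filter.Eventually.of_forall hmax
  have hzero : fderiv ℝ f x₀ - ε • Φ = 0 := hlm.hasFDerivAt_eq_zero hFd
  have heq : fderiv ℝ f x₀ = ε • Φ := by
    rwa [sub_eq_zero] at hzero
  have hgrad : ‖gradient f x₀‖ = ‖fderiv ℝ f x₀‖ :=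
    (InnerProductSpace.toDual ℝ _).symm.norm_map _
  rw [hgrad, heq, norm_smul, Real.norm_eq_abs, abs_of_pos hε]
  nlinarith [norm_nonneg Φ]

open Set Topology in
/-- At a maximum point of `f - ε√(1 + ‖·‖²)` the Laplacian of `f` is at most `εn`. -/
lemma sum_bound' (n : ℕ) (f : EuclideanSpace ℝ (Fin n) → ℝ) (hf : ContDiff ℝ 2 f)
    (ε : ℝ) (hε : 0 < ε) (x₀ : EuclideanSpace ℝ (Fin n))
    (hmax : ∀ y, f y - ε * Real.sqrt (1 + ‖y‖^2) ≤ f x₀ - ε * Real.sqrt (1 + ‖x₀‖^2)) :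
    ∑ i, fderiv ℝ (fun y => fderiv ℝ f y (EuclideanSpace.single i 1)) x₀
      (EuclideanSpace.single i 1) ≤ ε * n := by
  have hdiff : Differentiable ℝ f := hf.differentiable (by norm_num)
  have hfd1 : ContDiff ℝ 1 (fderiv ℝ f) := hf.fderiv_right (by norm_num)
  have key : ∀ i : Fin n, fderiv ℝ (fun y => fderiv ℝ f y (EuclideanSpace.single i 1)) x₀
      (EuclideanSpace.single i 1) ≤ ε := by
    intro i
    set e : EuclideanSpace ℝ (Fin n) := EuclideanSpace.single i 1 with he
    have hne : ‖e‖ = 1 := by simp [he, EuclideanSpace.norm_single]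
    set a : ℝ := ⟪x₀, e⟫ with ha
    set b : ℝ := 1 + ‖x₀‖^2 with hbdef
    have hab : 1 + a^2 ≤ b := by
      have := abs_real_inner_le_norm x₀ e
      rw [hne, mul_one] at this
      have h2 : a^2 ≤ ‖x₀‖^2 := by
        rw [← sq_abs a]
        exact pow_le_pow_left₀ (abs_nonneg a) this 2
      simp only [hbdef]; linarith
    obtain ⟨c, hc1, hψ', hψ''⟩ := sqrt_quad' a b hab
    have hline : ∀ t : ℝ, HasDerivAt (fun s : ℝ => x₀ + s • e) e t := by
      intro t
      simpa using ((hasDerivAt_id t).smul_const e).const_add x₀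
    have hpe : ∀ t : ℝ, 1 + ‖x₀ + t • e‖^2 = b + 2*a*t + t^2 := by
      intro t
      have h1 := norm_add_sq_real x₀ (t • e)
      rw [real_inner_smul_right, norm_smul] at h1
      simp only [Real.norm_eq_abs] at h1
      rw [mul_pow, sq_abs, hne] at h1
      simp only [hbdef, ha]
      rw [h1]; ring
    have hGmax : IsLocalMax
        (fun t : ℝ => f (x₀ + t • e) - ε * Real.sqrt (b + 2*a*t + t^2)) 0 := by
      refine Filter.Eventually.of_forall fun t => ?_
      have h1 := hmax (x₀ + t • e)
      rw [hpe t] at h1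
      simpa [hpe 0] using h1.trans_eq (by norm_num)
    have hG : ∀ t : ℝ, HasDerivAt
        (fun s : ℝ => f (x₀ + s • e) - ε * Real.sqrt (b + 2*a*s + s^2))
        (fderiv ℝ f (x₀ + t • e) e - ε * ((a + t) / Real.sqrt (b + 2*a*t + t^2))) t := by
      intro t
      exact ((hdiff (x₀ + t • e)).hasFDerivAt.comp_hasDerivAt t (hline t)).sub
        ((hψ' t).const_mul ε)
    have hc2 : HasFDerivAt (fderiv ℝ f) (fderiv ℝ (fderiv ℝ f) x₀) x₀ :=
      ((hfd1.differentiable (by norm_num)) x₀).hasFDerivAt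
    have hD := hc2.clm_apply (hasFDerivAt_const e x₀)
    have hDe : fderiv ℝ (fun y => fderiv ℝ f y e) x₀ =
        (fderiv ℝ f x₀).comp (0 : EuclideanSpace ℝ (Fin n) →L[ℝ] EuclideanSpace ℝ (Fin n))
          + (fderiv ℝ (fderiv ℝ f) x₀).flip e := hD.fderiv
    have hL0 : x₀ + (0:ℝ) • e = x₀ := by simp
    have hD' : HasFDerivAt (fun y => fderiv ℝ f y e)
        ((fderiv ℝ f x₀).comp (0 : EuclideanSpace ℝ (Fin n) →L[ℝ] EuclideanSpace ℝ (Fin n))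
          + (fderiv ℝ (fderiv ℝ f) x₀).flip e) (x₀ + (0:ℝ) • e) := by
      rw [hL0]; exact hD
    have hG2 : HasDerivAt (fun t : ℝ => fderiv ℝ f (x₀ + t • e) e)
        (((fderiv ℝ f x₀).comp (0 : EuclideanSpace ℝ (Fin n) →L[ℝ] EuclideanSpace ℝ (Fin n))
          + (fderiv ℝ (fderiv ℝ f) x₀).flip e) e) 0 :=
      by have := hD'.comp_hasDerivAt 0 (hline 0); exact this
    have hG' : HasDerivAt
        (fun t : ℝ => fderiv ℝ f (x₀ + t • e) e - ε * ((a + t) / Real.sqrt (b + 2*a*t + t^2)))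
        ((((fderiv ℝ f x₀).comp (0 : EuclideanSpace ℝ (Fin n) →L[ℝ] EuclideanSpace ℝ (Fin n))
          + (fderiv ℝ (fderiv ℝ f) x₀).flip e) e) - ε * c) 0 :=
      hG2.sub (hψ''.const_mul ε)
    have hkey := secondDeriv_nonpos_of_isLocalMax' hGmax hG hG'
    have hfin : fderiv ℝ (fun y => fderiv ℝ f y e) x₀ e ≤ ε * c := by
      rw [hDe]; linarith
    calc fderiv ℝ (fun y => fderiv ℝ f y e) x₀ e ≤ ε * c := hfin
      _ ≤ ε := by nlinarith
  calc (∑ i, fderiv ℝ (fun y => fderiv ℝ f y (EuclideanSpace.single i 1)) x₀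
      (EuclideanSpace.single i 1)) ≤ ∑ _i : Fin n, ε :=
        Finset.sum_le_sum (fun i _ => key i)
    _ = ε * n := by simp [mul_comm]

/-- Generalized (Omori–Yau type) maximum principle for the drift Laplacian
`ℒ_{II} f = Δf + ⟨V, ∇f⟩` on ℝⁿ: for any `C²` function `f` with sublinear growth
there is a sequence `x_k` with `f(x_k) → sup f` (as extended reals),
`|∇f(x_k)| → 0`, and `limsup (Δf + ⟨V,∇f⟩)(x_k) ≤ 0`. -/
theorem drift_laplacian_maximum_principle
    (n : ℕ) (V : EuclideanSpace ℝ (Fin n))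
    (f : EuclideanSpace ℝ (Fin n) → ℝ) (hf : ContDiff ℝ 2 f)
    (hgrowth : Tendsto (fun x => f x / ‖x‖) (cocompact (EuclideanSpace ℝ (Fin n))) (nhds 0)) :
    ∃ x : ℕ → EuclideanSpace ℝ (Fin n),
      Tendsto (fun k => (f (x k) : EReal)) atTop (nhds (⨆ y, (f y : EReal)))
      ∧ Tendsto (fun k => ‖gradient f (x k)‖) atTop (nhds 0)
      ∧ limsup (fun k =>
          (((∑ i, fderiv ℝ (fun y => fderiv ℝ f y (EuclideanSpace.single i 1)) (x k)
                (EuclideanSpace.single i 1))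
            + ⟪V, gradient f (x k)⟫ : ℝ) : EReal)) atTop ≤ 0 := by
  have hcont : Continuous f := hf.continuous
  set ε : ℕ → ℝ := fun k => 1 / (k + 1) with hεdef
  have hεpos : ∀ k, 0 < ε k := fun k => by positivity
  have hεtend : Tendsto ε atTop (nhds 0) := tendsto_one_div_add_atTop_nhds_zero_nat
  choose x hx using fun k => exists_max_point' n f hcont hgrowth (ε k) (hεpos k)
  have hgrad : ∀ k, ‖gradient f (x k)‖ ≤ ε k :=
    fun k => grad_bound' n f hf (ε k) (hεpos k) (x k) (hx k)
  have hsum : ∀ k, ∑ i, fderiv ℝ (fun y => fderiv ℝ f y (EuclideanSpace.single i 1)) (x k)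
      (EuclideanSpace.single i 1) ≤ ε k * n :=
    fun k => sum_bound' n f hf (ε k) (hεpos k) (x k) (hx k)
  refine ⟨x, ?_, ?_, ?_⟩
  · refine tendsto_order.2 ⟨fun a ha => ?_, fun a ha => ?_⟩
    · obtain ⟨y, hy⟩ := lt_iSup_iff.mp ha
      obtain ⟨r, har, hrf⟩ := EReal.exists_between_coe_real hy
      have hr : r < f y := by exact_mod_cast hrf
      have hlow : ∀ k, f y - ε k * Real.sqrt (1 + ‖y‖^2) ≤ f (x k) := by
        intro k
        have h1 := hx k y
        have h2 : 0 ≤ ε k * Real.sqrt (1 + ‖x k‖^2) := by positivity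
        linarith
      have htend : Tendsto (fun k => f y - ε k * Real.sqrt (1 + ‖y‖^2)) atTop
          (nhds (f y - 0 * Real.sqrt (1 + ‖y‖^2))) :=
        tendsto_const_nhds.sub ((hεtend.mul_const _))
      rw [zero_mul, sub_zero] at htend
      have hev : ∀ᶠ k in atTop, r < f y - ε k * Real.sqrt (1 + ‖y‖^2) :=
        htend.eventually (eventually_gt_nhds hr)
      filter_upwards [hev] with k hk
      have : r < f (x k) := lt_of_lt_of_le hk (hlow k)
      exact lt_of_lt_of_le har (by exact_mod_cast this.le)
    · exact Eventually.of_forall fun k =>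
        lt_of_le_of_lt (le_iSup (fun y => (f y : EReal)) (x k)) ha
  · exact squeeze_zero (fun k => norm_nonneg _) hgrad hεtend
  · have hbound : ∀ k,
        ((∑ i, fderiv ℝ (fun y => fderiv ℝ f y (EuclideanSpace.single i 1)) (x k)
            (EuclideanSpace.single i 1))
          + ⟪V, gradient f (x k)⟫ : ℝ) ≤ ε k * (n + ‖V‖) := by
      intro k
      have h1 := hsum k
      have h2 : ⟪V, gradient f (x k)⟫ ≤ ‖V‖ * ε k := by
        calc ⟪V, gradient f (x k)⟫ ≤ ‖V‖ * ‖gradient f (x k)‖ := real_inner_le_norm V _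
          _ ≤ ‖V‖ * ε k := by nlinarith [norm_nonneg V, hgrad k, (hεpos k).le]
      have : ε k * (n + ‖V‖) = ε k * n + ‖V‖ * ε k := by ring
      linarith
    calc limsup (fun k =>
          (((∑ i, fderiv ℝ (fun y => fderiv ℝ f y (EuclideanSpace.single i 1)) (x k)
                (EuclideanSpace.single i 1))
            + ⟪V, gradient f (x k)⟫ : ℝ) : EReal)) atTop
        ≤ limsup (fun k => ((ε k * (n + ‖V‖) : ℝ) : EReal)) atTop := by
          refine limsup_le_limsup (Eventually.of_forall fun k => ?_)
          exact EReal.coe_le_coe_iff.mpr (hbound k)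
      _ = ((0:ℝ) : EReal) := by
          refine Tendsto.limsup_eq ?_
          rw [EReal.tendsto_coe]
          have h := hεtend.mul_const ((n : ℝ) + ‖V‖)
          rwa [zero_mul] at h
      _ = 0 := by norm_num
end
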